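/- Let λ₁,…,λₙ be real numbers, not all zero, y₁,…,yₙ i.i.d. standard Gaussians, 0 < r < 1, ξ_r := ∑_{k=0}^∞ r^k/(k+2), and a > 0. Then P(∑ᵢ λᵢ(yᵢ² - 1) > a) ≤ exp(-min{a²/(8ξ_r·∑ᵢλᵢ²), r·a/(4·maxᵢ|λᵢ|)}). -/

import Mathlib

open MeasureTheory ProbabilityTheory Real Set
open scoped ENNReal NNReal

noncomputable def xi (r : ℝ) : ℝ := ∑' k : ℕ, r ^ k / ((k : ℝ) + 2)


lemma summable_aux {x r : ℝ} (hx : |x| ≤ r) (hr1 : r < 1) :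
    Summable (fun n : ℕ => x ^ n / ((n : ℝ) + 2)) := by
  have hr0 : 0 ≤ r := le_trans (abs_nonneg x) hx
  refine Summable.of_norm_bounded (summable_geometric_of_lt_one hr0 hr1) (fun n => ?_)
  have h2 : (0:ℝ) < (n : ℝ) + 2 := by positivity
  have h1 : ‖x ^ n / ((n : ℝ) + 2)‖ = |x| ^ n / ((n : ℝ) + 2) := by
    rw [norm_div, norm_pow, Real.norm_eq_abs, Real.norm_eq_abs, abs_of_pos h2]
  rw [h1]
  calc |x| ^ n / ((n : ℝ) + 2) ≤ |x| ^ n := div_le_self (by positivity) (by linarith)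
    _ ≤ r ^ n := pow_le_pow_left₀ (abs_nonneg x) hx n

lemma xi_summable {r : ℝ} (hr0 : 0 ≤ r) (hr1 : r < 1) :
    Summable (fun n : ℕ => r ^ n / ((n : ℝ) + 2)) :=
  summable_aux (by rw [abs_of_nonneg hr0]) hr1

lemma xi_pos {r : ℝ} (hr0 : 0 ≤ r) (hr1 : r < 1) : 0 < xi r := by
  have h := Summable.le_tsum (xi_summable hr0 hr1) 0 (fun n _ => by positivity)
  rw [xi]; norm_num at h ⊢; linarith

lemma series_bound {x r : ℝ} (hx : |x| ≤ r) (hr0 : 0 < r) (hr1 : r < 1) :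
    -x / 2 - Real.log (1 - x) / 2 ≤ x ^ 2 / 2 * xi r := by
  have hx1 : |x| < 1 := lt_of_le_of_lt hx hr1
  have H := Real.hasSum_pow_div_log_of_abs_lt_one hx1
  have hg : Summable (fun n : ℕ => x ^ n / ((n : ℝ) + 2)) := summable_aux hx hr1
  have H2 : HasSum (fun n : ℕ => x ^ (n + 1 + 1) / ((n : ℝ) + 1 + 1))
      (-Real.log (1 - x) - x) := by
    have := (hasSum_nat_add_iff (f := fun n : ℕ => x ^ (n + 1) / ((n : ℝ) + 1)) 1
      (g := -Real.log (1 - x) - x)).mpr ?_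
    · convert this using 2 with n
      · rfl
      push_cast; ring
    · simpa using H
  have H3 : HasSum (fun n : ℕ => x ^ 2 * (x ^ n / ((n : ℝ) + 2)))
      (x ^ 2 * ∑' n : ℕ, x ^ n / ((n : ℝ) + 2)) := hg.hasSum.mul_left _
  have heq : (fun n : ℕ => x ^ 2 * (x ^ n / ((n : ℝ) + 2)))
      = fun n : ℕ => x ^ (n + 1 + 1) / ((n : ℝ) + 1 + 1) := by
    funext n; rw [show n + 1 + 1 = n + 2 by ring, pow_add]; push_cast; ring
  rw [heq] at H3
  have hval : x ^ 2 * ∑' n : ℕ, x ^ n / ((n : ℝ) + 2) = -Real.log (1 - x) - x :=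
    H3.unique H2
  have hle : (∑' n : ℕ, x ^ n / ((n : ℝ) + 2)) ≤ xi r := by
    refine Summable.tsum_le_tsum (fun n => ?_) hg (xi_summable hr0.le hr1)
    have hxr : x ^ n ≤ r ^ n :=
      calc x ^ n ≤ |x ^ n| := le_abs_self _
        _ = |x| ^ n := abs_pow x n
        _ ≤ r ^ n := pow_le_pow_left₀ (abs_nonneg x) hx n
    exact div_le_div_of_nonneg_right hxr (by positivity)
  nlinarith [sq_nonneg x]


lemma gaussian_pdf_mul {s : ℝ} (hs : s < 1/2) (x : ℝ) :
    gaussianPDFReal 0 1 x * Real.exp (s * x ^ 2)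
      = (Real.sqrt (2 * π))⁻¹ * Real.exp (-(1/2 - s) * x ^ 2) := by
  rw [gaussianPDFReal]
  push_cast
  rw [mul_assoc, ← Real.exp_add]
  ring_nf

lemma integrable_gaussian_sq_exp {s : ℝ} (hs : s < 1/2) :
    Integrable (fun x => Real.exp (s * x ^ 2)) (gaussianReal 0 1) := by
  rw [gaussianReal_of_var_ne_zero 0 one_ne_zero]
  have hpdf : gaussianPDF 0 1 = fun x => ((Real.toNNReal (gaussianPDFReal 0 1 x) : ℝ≥0) : ℝ≥0∞) := rfl
  rw [hpdf, integrable_withDensity_iff_integrable_smul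
    ((measurable_gaussianPDFReal 0 1).real_toNNReal)]
  have : (fun x => Real.toNNReal (gaussianPDFReal 0 1 x) • Real.exp (s * x ^ 2))
      = fun x => (Real.sqrt (2 * π))⁻¹ * Real.exp (-(1/2 - s) * x ^ 2) := by
    funext x
    rw [NNReal.smul_def, smul_eq_mul, Real.coe_toNNReal _ (gaussianPDFReal_nonneg 0 1 x),
      gaussian_pdf_mul hs]
  rw [this]
  exact (integrable_exp_neg_mul_sq (by linarith)).const_mul _

lemma integral_gaussian_sq_exp {s : ℝ} (hs : s < 1/2) :
    ∫ x, Real.exp (s * x ^ 2) ∂(gaussianReal 0 1) = (Real.sqrt (1 - 2 * s))⁻¹ := by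
  rw [gaussianReal_of_var_ne_zero 0 one_ne_zero]
  have hpdf : gaussianPDF 0 1 = fun x => ((Real.toNNReal (gaussianPDFReal 0 1 x) : ℝ≥0) : ℝ≥0∞) := rfl
  rw [hpdf, integral_withDensity_eq_integral_smul
    ((measurable_gaussianPDFReal 0 1).real_toNNReal)]
  have : (fun x => Real.toNNReal (gaussianPDFReal 0 1 x) • Real.exp (s * x ^ 2))
      = fun x => (Real.sqrt (2 * π))⁻¹ * Real.exp (-(1/2 - s) * x ^ 2) := by
    funext x
    rw [NNReal.smul_def, smul_eq_mul, Real.coe_toNNReal _ (gaussianPDFReal_nonneg 0 1 x),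
      gaussian_pdf_mul hs]
  rw [this, integral_const_mul, integral_gaussian]
  have h1 : π / (1/2 - s) = (2 * π) / (1 - 2 * s) := by
    rw [div_eq_div_iff (by linarith) (by linarith)]; ring
  rw [h1, Real.sqrt_div (by positivity)]
  have h2 : Real.sqrt (2 * π) ≠ 0 := by positivity
  field_simp


lemma exp_rewrite (t l : ℝ) : (fun x : ℝ => Real.exp (t * (l * (x ^ 2 - 1))))
    = fun x => Real.exp (-(t * l)) * Real.exp ((t * l) * x ^ 2) := by
  funext x; rw [← Real.exp_add]; ring_nf

lemma integrable_coord {t l : ℝ} (hs : t * l < 1/2) :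
    Integrable (fun x : ℝ => Real.exp (t * (l * (x ^ 2 - 1)))) (gaussianReal 0 1) := by
  rw [exp_rewrite]
  exact (integrable_gaussian_sq_exp hs).const_mul _

lemma mgf_coord {t l : ℝ} (hs : t * l < 1/2) :
    mgf (fun x : ℝ => l * (x ^ 2 - 1)) (gaussianReal 0 1) t
      = Real.exp (-(t * l)) * (Real.sqrt (1 - 2 * (t * l)))⁻¹ := by
  unfold mgf
  rw [show (fun x : ℝ => Real.exp (t * (l * (x ^ 2 - 1)))) = _ from exp_rewrite t l]
  rw [integral_const_mul, integral_gaussian_sq_exp hs]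

lemma mgf_coord_bound {t l r : ℝ} (hr : r ∈ Set.Ioo (0:ℝ) 1) (h : |2 * (t * l)| ≤ r) :
    mgf (fun x : ℝ => l * (x ^ 2 - 1)) (gaussianReal 0 1) t
      ≤ Real.exp (2 * t ^ 2 * l ^ 2 * xi r) := by
  set s := t * l with hs_def
  have h2s : 2 * s ≤ r := le_trans (le_abs_self _) h
  have hs : s < 1/2 := by nlinarith [hr.2]
  have hy : (0:ℝ) < 1 - 2 * s := by nlinarith [hr.2]
  rw [mgf_coord hs]
  have hsqrt : (Real.sqrt (1 - 2 * s))⁻¹ = Real.exp (-(Real.log (1 - 2 * s) / 2)) := by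
    rw [← Real.log_sqrt hy.le, Real.exp_neg, Real.exp_log (Real.sqrt_pos.mpr hy)]
  rw [hsqrt, ← Real.exp_add]
  apply Real.exp_le_exp.mpr
  have hsb := series_bound (x := 2 * s) h hr.1 hr.2
  have hring : (2 * s) ^ 2 / 2 * xi r = 2 * t ^ 2 * l ^ 2 * xi r := by
    rw [hs_def]; ring
  rw [hring] at hsb
  linarith


lemma map_eval_pi {n : ℕ} (μ : Fin n → Measure ℝ) [∀ i, IsProbabilityMeasure (μ i)] (i : Fin n) :
    (Measure.pi μ).map (fun y => y i) = μ i := by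
  ext s hs
  rw [Measure.map_apply (measurable_pi_apply i) hs]
  have : (fun y : Fin n → ℝ => y i) ⁻¹' s = Set.pi Set.univ (Function.update (fun _ => Set.univ) i s) :=
    Set.eval_preimage
  rw [this, Measure.pi_pi]
  rw [Finset.prod_eq_single_of_mem i (Finset.mem_univ i)
    (fun j _ hj => by rw [Function.update_of_ne hj]; simp)]
  rw [Function.update_self]

lemma iIndepFun_eval {n : ℕ} (μ : Fin n → Measure ℝ) [∀ i, IsProbabilityMeasure (μ i)] :
    iIndepFun (fun (i : Fin n) (y : Fin n → ℝ) => y i) (Measure.pi μ) := by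
  rw [iIndepFun_iff_measure_inter_preimage_eq_mul]
  intro S sets hsets
  classical
  have hI : (⋂ i ∈ S, (fun y : Fin n → ℝ => y i) ⁻¹' sets i)
      = Set.pi Set.univ (fun i => if i ∈ S then sets i else Set.univ) := by
    ext y
    simp only [Set.mem_iInter, Set.mem_preimage, Set.mem_pi, Set.mem_univ, true_imp_iff]
    constructor
    · intro h i
      split_ifs with h'
      · exact h i h'
      · trivial
    · intro h i hi
      have := h i
      rwa [if_pos hi] at this
  rw [hI, Measure.pi_pi]
  have hP : ∀ i : Fin n, μ i (if i ∈ S then sets i else Set.univ)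
      = if i ∈ S then μ i (sets i) else 1 := by
    intro i; split_ifs <;> simp
  simp_rw [hP]
  rw [Finset.prod_ite_mem Finset.univ S (fun i => μ i (sets i)), Finset.univ_inter]
  refine Finset.prod_congr rfl (fun i hi => ?_)
  rw [← map_eval_pi μ i, Measure.map_apply (measurable_pi_apply i) (hsets i hi)]

theorem tail_bound_one_sided (n : ℕ) (lam : Fin n → ℝ) (hlam : lam ≠ 0)
    (r : ℝ) (hr : r ∈ Set.Ioo (0 : ℝ) 1) (a : ℝ) (ha : 0 < a) :
    (Measure.pi fun _ : Fin n => gaussianReal 0 1)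
        {y | a < ∑ i, lam i * ((y i) ^ 2 - 1)}
      ≤ ENNReal.ofReal
          (Real.exp (-min (a ^ 2 / (8 * xi r * ∑ i, lam i ^ 2))
            (r * a / (4 * ⨆ i, |lam i|)))) := by
  obtain ⟨hr0, hr1⟩ := hr
  obtain ⟨i₀, hi₀⟩ := Function.ne_iff.mp hlam
  simp only [Pi.zero_apply] at hi₀
  set μs : Fin n → Measure ℝ := fun _ => gaussianReal 0 1 with hμs
  set M := ⨆ i, |lam i| with hM_def
  set Ssum := ∑ i, lam i ^ 2 with hS_def
  have hMb : ∀ i, |lam i| ≤ M := fun i =>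
    le_ciSup (Set.Finite.bddAbove (Set.finite_range fun i => |lam i|)) i
  have hM : 0 < M := lt_of_lt_of_le (abs_pos.mpr hi₀) (hMb i₀)
  have hS : 0 < Ssum := Finset.sum_pos' (fun i _ => sq_nonneg _)
    ⟨i₀, Finset.mem_univ _, by positivity⟩
  have hξ : 0 < xi r := xi_pos hr0.le hr1
  set t := min (a / (4 * xi r * Ssum)) (r / (2 * M)) with ht_def
  have ht : 0 < t := lt_min (by positivity) (by positivity)
  set X : Fin n → (Fin n → ℝ) → ℝ := fun i y => lam i * ((y i) ^ 2 - 1) with hX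
  have hmeas : ∀ i, Measurable (X i) := fun i => by
    have h0 : Measurable fun y : Fin n → ℝ => y i := measurable_pi_apply i
    fun_prop
  have hindep : iIndepFun X (Measure.pi μs) := by
    have h := (iIndepFun_eval μs).comp (fun i x => lam i * (x ^ 2 - 1))
      (fun i => by fun_prop)
    exact h
  have habs : ∀ i, |2 * (t * lam i)| ≤ r := fun i => by
    have h1 : t ≤ r / (2 * M) := min_le_right _ _
    have h2 : |2 * (t * lam i)| = 2 * t * |lam i| := by
      rw [abs_mul, abs_mul, abs_of_nonneg (by norm_num : (0:ℝ) ≤ 2), abs_of_pos ht]; ring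
    rw [h2]
    calc 2 * t * |lam i| ≤ 2 * (r / (2 * M)) * M := by
          apply mul_le_mul (by nlinarith) (hMb i) (abs_nonneg _) (by positivity)
      _ = r := by field_simp
  have hslt : ∀ i, t * lam i < 1/2 := fun i => by
    have h2 := le_trans (le_abs_self _) (habs i)
    linarith
  have hint_i : ∀ i, Integrable (fun y => Real.exp (t * X i y)) (Measure.pi μs) := fun i => by
    have h1 : Integrable (fun x : ℝ => Real.exp (t * (lam i * (x ^ 2 - 1)))) (gaussianReal 0 1) :=
      integrable_coord (hslt i)
    have hmap : (Measure.pi μs).map (fun y => y i) = gaussianReal 0 1 := map_eval_pi μs i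
    have hae : AEStronglyMeasurable (fun x : ℝ => Real.exp (t * (lam i * (x ^ 2 - 1))))
        ((Measure.pi μs).map (fun y => y i)) := by rw [hmap]; exact h1.1
    have h2 := (integrable_map_measure hae (measurable_pi_apply i).aemeasurable).mp
      (by rw [hmap]; exact h1)
    exact h2
  have hint : Integrable (fun y => Real.exp (t * (∑ i, X i) y)) (Measure.pi μs) :=
    hindep.integrable_exp_mul_sum hmeas (fun i _ => hint_i i)
  have hmgf_i : ∀ i, mgf (X i) (Measure.pi μs) t
      ≤ Real.exp (2 * t ^ 2 * (lam i) ^ 2 * xi r) := fun i => by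
    have heq : mgf (X i) (Measure.pi μs) t
        = mgf (fun x : ℝ => lam i * (x ^ 2 - 1)) (gaussianReal 0 1) t := by
      unfold mgf
      have hmap : (Measure.pi μs).map (fun y => y i) = gaussianReal 0 1 := map_eval_pi μs i
      have hm : Measurable fun x : ℝ => Real.exp (t * (lam i * (x ^ 2 - 1))) := by fun_prop
      rw [← hmap, integral_map (measurable_pi_apply i).aemeasurable hm.aestronglyMeasurable]
    rw [heq]
    exact mgf_coord_bound ⟨hr0, hr1⟩ (habs i)
  have hmgf : mgf (∑ i, X i) (Measure.pi μs) t ≤ Real.exp (2 * t ^ 2 * xi r * Ssum) := by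
    rw [hindep.mgf_sum hmeas]
    calc ∏ i, mgf (X i) (Measure.pi μs) t
        ≤ ∏ i, Real.exp (2 * t ^ 2 * (lam i) ^ 2 * xi r) :=
          Finset.prod_le_prod (fun i _ => mgf_nonneg) (fun i _ => hmgf_i i)
      _ = Real.exp (∑ i, 2 * t ^ 2 * (lam i) ^ 2 * xi r) := (Real.exp_sum _ _).symm
      _ = Real.exp (2 * t ^ 2 * xi r * Ssum) := by
          rw [hS_def, Finset.mul_sum]
          congr 1
          exact Finset.sum_congr rfl (fun i _ => by ring)
  have hcher := measure_ge_le_exp_mul_mgf (μ := Measure.pi μs) (X := ∑ i, X i) a ht.le hint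
  have hsub : {y : Fin n → ℝ | a < ∑ i, lam i * ((y i) ^ 2 - 1)}
      ⊆ {y | a ≤ (∑ i, X i) y} := by
    intro y hy
    simp only [Set.mem_setOf_eq, Finset.sum_apply, hX] at hy ⊢
    exact le_of_lt hy
  have hnum : Real.exp (-t * a) * Real.exp (2 * t ^ 2 * xi r * Ssum)
      ≤ Real.exp (-min (a ^ 2 / (8 * xi r * Ssum)) (r * a / (4 * M))) := by
    rw [← Real.exp_add]
    apply Real.exp_le_exp.mpr
    have h1 : t ≤ a / (4 * xi r * Ssum) := min_le_left _ _
    have h1' : t * (4 * xi r * Ssum) ≤ a := (le_div_iff₀ (by positivity)).mp h1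
    have h2 : 2 * t ^ 2 * xi r * Ssum ≤ t * (a / 2) := by
      nlinarith [mul_le_mul_of_nonneg_left h1' ht.le]
    have h3 : t * (a / 2) = min (a ^ 2 / (8 * xi r * Ssum)) (r * a / (4 * M)) := by
      rw [ht_def, min_mul_of_nonneg _ _ (by positivity : (0:ℝ) ≤ a / 2)]
      congr 1
      · field_simp; ring
      · field_simp; ring
    linarith
  calc (Measure.pi μs) {y | a < ∑ i, lam i * ((y i) ^ 2 - 1)}
      ≤ (Measure.pi μs) {y | a ≤ (∑ i, X i) y} := measure_mono hsub
    _ = ENNReal.ofReal ((Measure.pi μs) {y | a ≤ (∑ i, X i) y}).toReal :=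
        (ENNReal.ofReal_toReal (measure_ne_top _ _)).symm
    _ ≤ ENNReal.ofReal (Real.exp (-t * a) * mgf (∑ i, X i) (Measure.pi μs) t) :=
        ENNReal.ofReal_le_ofReal hcher
    _ ≤ ENNReal.ofReal (Real.exp (-min (a ^ 2 / (8 * xi r * Ssum)) (r * a / (4 * M)))) := by
        apply ENNReal.ofReal_le_ofReal
        calc Real.exp (-t * a) * mgf (∑ i, X i) (Measure.pi μs) t
            ≤ Real.exp (-t * a) * Real.exp (2 * t ^ 2 * xi r * Ssum) :=
              mul_le_mul_of_nonneg_left hmgf (Real.exp_pos _).le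
          _ ≤ _ := hnum
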